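/- Let 0 < α < 1/2 (with 2κα² = 2α) and h as above, and set a₀ = (1+(2α)²)/(1+2α). Then 2α < a₀ < 1, and for every a ∈ [a₀, 1] and every s > 0: s^{2(a-2α)}/(2α + s^{2(1-2α)}) ≤ 1. -/

import Mathlib

open Real

theorem stmt12 (α : ℝ) (hα0 : 0 < α) (hα1 : α < 1/2) :
    2*α < (1+(2*α)^2)/(1+2*α) ∧ (1+(2*α)^2)/(1+2*α) < 1 ∧
    ∀ a : ℝ, (1+(2*α)^2)/(1+2*α) ≤ a → a ≤ 1 → ∀ s : ℝ, 0 < s →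
      s ^ (2*(a-2*α)) / (2*α + s ^ (2*(1-2*α))) ≤ 1 := by
  have hd : (0:ℝ) < 1 + 2*α := by linarith
  have h12 : (0:ℝ) < 1 - 2*α := by linarith
  refine ⟨by rw [lt_div_iff₀ hd]; nlinarith, by rw [div_lt_iff₀ hd]; nlinarith, ?_⟩
  intro a ha₀ ha1 s hs
  have ha₀' : (1+(2*α)^2) ≤ a * (1+2*α) := by
    rw [div_le_iff₀ hd] at ha₀; linarith
  have ha2 : 2*α ≤ a := by nlinarith
  set θ : ℝ := (1-a)/(1-2*α) with hθdef
  have hθ0 : 0 ≤ θ := div_nonneg (by linarith) (by linarith)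
  have hθ1 : 1 - θ = (a-2*α)/(1-2*α) := by
    rw [hθdef, one_sub_div h12.ne']; congr 1; ring
  have hθ1' : 0 ≤ 1 - θ := by rw [hθ1]; exact div_nonneg (by linarith) h12.le
  have hθle : θ ≤ 2*α := by
    rw [hθdef, div_le_iff₀ h12]; nlinarith
  have hsq : (0:ℝ) ≤ s ^ (2*(1-2*α)) := le_of_lt (rpow_pos_of_pos hs _)
  have key : s ^ (2*(a-2*α)) ≤ θ * 1 + (1-θ) * s ^ (2*(1-2*α)) := by
    have h := Real.geom_mean_le_arith_mean2_weighted hθ0 hθ1' zero_le_one hsq (by ring)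
    have heq : (1:ℝ) ^ θ * (s ^ (2*(1-2*α))) ^ (1-θ) = s ^ (2*(a-2*α)) := by
      rw [Real.one_rpow, one_mul, ← Real.rpow_mul hs.le]
      congr 1
      rw [hθ1]; field_simp
    rw [← heq]; exact h
  have hpos : (0:ℝ) < 2*α + s ^ (2*(1-2*α)) := by positivity
  rw [div_le_one hpos]
  calc s ^ (2*(a-2*α)) ≤ θ * 1 + (1-θ) * s ^ (2*(1-2*α)) := key
    _ ≤ 2*α + s ^ (2*(1-2*α)) := by nlinarith
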